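/- For every real α > 2, the Lebesgue integral over the plane of 1 minus the Gaussian cutoff of the power-law satisfies ∫_{ℝ²} (1 − exp(−|x|^{−α})) dx = π Γ((α−2)/α), where Γ denotes Euler's gamma function and |x| is the Euclidean norm of x ∈ ℝ². -/

import Mathlib

open MeasureTheory Filter Real

noncomputable section

abbrev E2 := EuclideanSpace ℝ (Fin 2)

/-- `∫_{ℝ²} (1 - exp(-|x|^{-α})) dx = π Γ((α-2)/α)` for `α > 2`. -/
theorem stmt_2 (α : ℝ) (hα : 2 < α) :
    ∫ x : E2, (1 - Real.exp (-(‖x‖ ^ (-α)))) = π * Real.Gamma ((α - 2) / α) := by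
  have hα0 : 0 < α := by linarith
  set s : ℝ := (α - 2) / α with hs_def
  have hs : 0 < s := div_pos (by linarith) hα0
  have hs1 : s - 1 = (-2) / α := by
    field_simp [hs_def]
    rw [hs_def, sub_mul, div_mul_cancel₀ _ hα0.ne']; ring
  -- the radius function
  have hf_mble : Measurable fun x : E2 => ‖x‖ ^ (-α) :=
    measurable_norm.pow_const _
  have hf_nn : ∀ x : E2, 0 ≤ ‖x‖ ^ (-α) := fun x => Real.rpow_nonneg (norm_nonneg x) _
  -- integrand nonneg and as interval integral
  have h_eq : ∀ x : E2, 1 - Real.exp (-(‖x‖ ^ (-α)))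
      = ∫ t in (0:ℝ)..(‖x‖ ^ (-α)), Real.exp (-t) := by
    intro x
    rw [intervalIntegral.integral_comp_neg (fun t => Real.exp t), integral_exp]
    simp
  have h_nn : ∀ x : E2, 0 ≤ 1 - Real.exp (-(‖x‖ ^ (-α))) := by
    intro x
    have : Real.exp (-(‖x‖ ^ (-α))) ≤ 1 := by
      rw [Real.exp_le_one_iff]
      simpa using hf_nn x
    linarith
  have h_mble : Measurable fun x : E2 => 1 - Real.exp (-(‖x‖ ^ (-α))) := by
    exact (measurable_const.sub (hf_mble.neg.exp))
  -- pass to lintegral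
  rw [integral_eq_lintegral_of_nonneg_ae (Eventually.of_forall h_nn)
    h_mble.aestronglyMeasurable]
  -- layer cake
  have layer : ∫⁻ x : E2, ENNReal.ofReal (1 - Real.exp (-(‖x‖ ^ (-α))))
      = ∫⁻ t in Set.Ioi (0:ℝ),
          (volume {x : E2 | t ≤ ‖x‖ ^ (-α)}) * ENNReal.ofReal (Real.exp (-t)) := by
    have := lintegral_comp_eq_lintegral_meas_le_mul (volume : Measure E2)
      (f := fun x : E2 => ‖x‖ ^ (-α)) (g := fun t => Real.exp (-t))
      (Eventually.of_forall hf_nn) hf_mble.aemeasurable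
      (fun t _ => (Real.continuous_exp.comp continuous_neg).intervalIntegrable 0 t)
      (Eventually.of_forall fun t => (Real.exp_pos _).le)
    rw [← this]
    exact lintegral_congr fun x => by rw [h_eq x]
  rw [layer]
  -- compute the measure of the superlevel sets
  have hvol : ∀ t ∈ Set.Ioi (0:ℝ), volume {x : E2 | t ≤ ‖x‖ ^ (-α)}
      = ENNReal.ofReal (π * t ^ (s - 1)) := by
    intro t ht
    have ht0 : (0:ℝ) < t := ht
    have hset : {x : E2 | t ≤ ‖x‖ ^ (-α)}
        = Metric.closedBall (0 : E2) (t ^ (-α)⁻¹) \ {0} := by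
      ext x
      simp only [Set.mem_setOf_eq, Set.mem_diff, Metric.mem_closedBall, dist_zero_right,
        Set.mem_singleton_iff]
      rcases eq_or_ne x 0 with rfl | hx
      · simp only [norm_zero]
        rw [Real.zero_rpow (neg_ne_zero.mpr hα0.ne')]
        simp [not_le.mpr ht0]
      · have hxn : (0:ℝ) < ‖x‖ := norm_pos_iff.mpr hx
        rw [← Real.le_rpow_inv_iff_of_neg hxn ht0 (by linarith : -α < 0)]
        tauto
    rw [hset, measure_diff_null (measure_singleton _), EuclideanSpace.volume_closedBall]
    simp only [Fintype.card_fin]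
    have hr : (0:ℝ) ≤ t ^ (-α)⁻¹ := (Real.rpow_pos_of_pos ht0 _).le
    rw [← ENNReal.ofReal_pow hr, ← ENNReal.ofReal_mul (by positivity)]
    congr 1
    have h1 : (t ^ (-α)⁻¹) ^ (2:ℕ) = t ^ (s - 1) := by
      rw [← Real.rpow_natCast (t ^ (-α)⁻¹) 2, ← Real.rpow_mul ht0.le]
      congr 1
      rw [hs1]
      field_simp
      norm_num
    have h2 : Real.Gamma ((2:ℕ) / 2 + 1) = 1 := by
      norm_num [Real.Gamma_two]
    rw [h1]
    rw [show ((2:ℕ):ℝ) / 2 + 1 = 2 by norm_num, Real.Gamma_two]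
    rw [Real.sq_sqrt Real.pi_pos.le]
    ring
  have hstep : ∫⁻ t in Set.Ioi (0:ℝ),
      (volume {x : E2 | t ≤ ‖x‖ ^ (-α)}) * ENNReal.ofReal (Real.exp (-t))
      = ∫⁻ t in Set.Ioi (0:ℝ), ENNReal.ofReal (π * (Real.exp (-t) * t ^ (s - 1))) := by
    apply setLIntegral_congr_fun measurableSet_Ioi
    intro t ht
    have ht0 : (0:ℝ) < t := ht
    beta_reduce
    rw [hvol t ht, ← ENNReal.ofReal_mul (by positivity)]
    congr 1
    ring
  rw [hstep]
  -- evaluate via the Gamma integral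
  have hint : IntegrableOn (fun t : ℝ => π * (Real.exp (-t) * t ^ (s - 1)))
      (Set.Ioi (0:ℝ)) volume :=
    (Real.GammaIntegral_convergent hs).const_mul π
  have hnn : (0:ℝ→ℝ) ≤ᵐ[volume.restrict (Set.Ioi 0)]
      fun t : ℝ => π * (Real.exp (-t) * t ^ (s - 1)) := by
    rw [EventuallyLE, ae_restrict_iff' measurableSet_Ioi]
    apply Eventually.of_forall
    intro t ht
    have ht0 : (0:ℝ) < t := ht
    positivity
  rw [← ofReal_integral_eq_lintegral_ofReal hint hnn]
  rw [MeasureTheory.integral_const_mul, ← Real.Gamma_eq_integral hs]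
  exact ENNReal.toReal_ofReal (by positivity)
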